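/- Let a > 0, b > 0 and 0 < α ≤ 1. The function g(u,h) = (1 − α·u)·exp(−(a·u + b·h)) + α·b·(u² + h²) is convex on the square [0,1] × [0,1]. Consequently, for nonnegative weights q_1,…,q_N, the function G(P) = Σ_{i=1}^N q_i·[ (1 − α·p_i^{UE})·exp(−(a·p_i^{UE} + b·p_i^{H})) + α·b·((p_i^{UE})² + (p_i^{H})²) ] is convex on [0,1]^{2N}. (Second half of Proposition 1, with a = πα λ_UE R_UE² and b = π λ_H R_H².) -/

import Mathlib

open Real Set

private lemma aux_d1 (A B K c C y₁ y₂ d₁ d₂ t : ℝ) :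
    HasDerivAt (fun t => (A + B*t) * Real.exp (-(K + c*t)) + C*((y₁+d₁*t)^2+(y₂+d₂*t)^2))
      ((B - c*(A+B*t)) * Real.exp (-(K + c*t)) + C*(2*d₁*(y₁+d₁*t)+2*d₂*(y₂+d₂*t))) t := by
  have h1 : HasDerivAt (fun t : ℝ => A + B*t) B t := by
    simpa using ((hasDerivAt_id t).const_mul B).const_add A
  have h2 : HasDerivAt (fun t : ℝ => -(K + c*t)) (-c) t := by
    exact (((hasDerivAt_id t).const_mul c).const_add K).neg.congr_deriv (by ring)
  have h4 := h1.mul h2.exp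
  have h5 : HasDerivAt (fun t : ℝ => y₁ + d₁*t) d₁ t := by
    simpa using ((hasDerivAt_id t).const_mul d₁).const_add y₁
  have h6 : HasDerivAt (fun t : ℝ => y₂ + d₂*t) d₂ t := by
    simpa using ((hasDerivAt_id t).const_mul d₂).const_add y₂
  have h7 := ((h5.pow 2).add (h6.pow 2)).const_mul C
  have := h4.add h7
  refine this.congr_deriv ?_
  push_cast; ring

private lemma aux_d2 (A B K c C y₁ y₂ d₁ d₂ t : ℝ) :
    HasDerivAt (fun t => (B - c*(A+B*t)) * Real.exp (-(K + c*t)) + C*(2*d₁*(y₁+d₁*t)+2*d₂*(y₂+d₂*t)))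
      ((c^2*(A+B*t) - 2*c*B) * Real.exp (-(K + c*t)) + C*(2*d₁^2+2*d₂^2)) t := by
  have h0 : HasDerivAt (fun t : ℝ => A + B*t) B t := by
    simpa using ((hasDerivAt_id t).const_mul B).const_add A
  have h1 : HasDerivAt (fun t : ℝ => B - c*(A+B*t)) (-(c*B)) t := by
    exact (h0.const_mul c).const_sub B
  have h2 : HasDerivAt (fun t : ℝ => -(K + c*t)) (-c) t := by
    exact (((hasDerivAt_id t).const_mul c).const_add K).neg.congr_deriv (by ring)
  have h4 := h1.mul h2.exp
  have h5 : HasDerivAt (fun t : ℝ => y₁ + d₁*t) d₁ t := by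
    simpa using ((hasDerivAt_id t).const_mul d₁).const_add y₁
  have h6 : HasDerivAt (fun t : ℝ => y₂ + d₂*t) d₂ t := by
    simpa using ((hasDerivAt_id t).const_mul d₂).const_add y₂
  have h7 := ((h5.const_mul (2*d₁)).add (h6.const_mul (2*d₂))).const_mul C
  have := h4.add h7
  refine this.congr_deriv ?_
  push_cast; ring

/-- Convexity of the segment restriction. -/
private lemma line_convex (a b α : ℝ) (ha : 0 < a) (hb : 0 < b) (hα : 0 < α) (hα1 : α ≤ 1)
    (y₁ y₂ d₁ d₂ : ℝ)
    (hmem : ∀ r ∈ Icc (0:ℝ) 1, (y₁+d₁*r ∈ Icc (0:ℝ) 1 ∧ y₂+d₂*r ∈ Icc (0:ℝ) 1)) :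
    ConvexOn ℝ (Icc (0:ℝ) 1) (fun r =>
      (1 - α*(y₁+d₁*r)) * Real.exp (-(a*(y₁+d₁*r)+b*(y₂+d₂*r))) + α*b*((y₁+d₁*r)^2+(y₂+d₂*r)^2)) := by
  set A : ℝ := 1 - α*y₁ with hA
  set B : ℝ := -(α*d₁) with hB
  set K : ℝ := a*y₁+b*y₂ with hK
  set c : ℝ := a*d₁+b*d₂ with hc
  have hfun : (fun r : ℝ =>
      (1 - α*(y₁+d₁*r)) * Real.exp (-(a*(y₁+d₁*r)+b*(y₂+d₂*r))) + α*b*((y₁+d₁*r)^2+(y₂+d₂*r)^2))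
      = fun r : ℝ => (A + B*r) * Real.exp (-(K + c*r)) + (α*b)*((y₁+d₁*r)^2+(y₂+d₂*r)^2) := by
    funext r
    have h1 : 1 - α*(y₁+d₁*r) = A + B*r := by rw [hA, hB]; ring
    have h2 : a*(y₁+d₁*r)+b*(y₂+d₂*r) = K + c*r := by rw [hK, hc]; ring
    rw [h1, h2]
  rw [hfun]
  apply convexOn_of_hasDerivWithinAt2_nonneg (convex_Icc 0 1)
    (f' := fun t => (B - c*(A+B*t)) * Real.exp (-(K + c*t)) + (α*b)*(2*d₁*(y₁+d₁*t)+2*d₂*(y₂+d₂*t)))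
    (f'' := fun t => (c^2*(A+B*t) - 2*c*B) * Real.exp (-(K + c*t)) + (α*b)*(2*d₁^2+2*d₂^2))
  · apply Continuous.continuousOn
    fun_prop
  · intro x _
    exact (aux_d1 A B K c (α*b) y₁ y₂ d₁ d₂ x).hasDerivWithinAt
  · intro x _
    exact (aux_d2 A B K c (α*b) y₁ y₂ d₁ d₂ x).hasDerivWithinAt
  · intro x hx
    rw [interior_Icc] at hx
    obtain ⟨hu, hh⟩ := hmem x ⟨hx.1.le, hx.2.le⟩
    set u : ℝ := y₁ + d₁*x with hudef
    set h : ℝ := y₂ + d₂*x with hhdef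
    have hAB : A + B*x = 1 - α*u := by rw [hA, hB, hudef]; ring
    have hKc : K + c*x = a*u + b*h := by rw [hK, hc, hudef, hhdef]; ring
    have ht' : 0 ≤ 1 - α*u := by nlinarith [hu.2, hu.1]
    have hE1 : Real.exp (-(K + c*x)) ≤ 1 := by
      rw [Real.exp_le_one_iff, hKc]
      nlinarith [hu.1, hh.1]
    have hE0 : 0 < Real.exp (-(K + c*x)) := Real.exp_pos _
    set E := Real.exp (-(K + c*x)) with hEdef
    set X : ℝ := c^2*(A+B*x) - 2*c*B with hX
    have key : 0 ≤ X + (α*b)*(2*d₁^2+2*d₂^2) := by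
      rw [hX, hAB, hB, hc]
      nlinarith [mul_nonneg (sq_nonneg (a*d₁+b*d₂)) ht',
        mul_nonneg (mul_nonneg hα.le hb.le) (sq_nonneg (d₁+d₂)),
        mul_nonneg (mul_nonneg hα.le ha.le) (sq_nonneg d₁),
        mul_nonneg (mul_nonneg hα.le hb.le) (sq_nonneg d₁),
        mul_nonneg (mul_nonneg hα.le hb.le) (sq_nonneg d₂)]
    rcases le_or_gt 0 X with hX0 | hX0
    · have : 0 ≤ X * E := mul_nonneg hX0 hE0.le
      nlinarith [mul_nonneg (mul_nonneg hα.le hb.le) (sq_nonneg d₁),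
        mul_nonneg (mul_nonneg hα.le hb.le) (sq_nonneg d₂)]
    · have h1 : X * 1 ≤ X * E := mul_le_mul_of_nonpos_left hE1 hX0.le
      nlinarith

private lemma g_convexOn (a b α : ℝ) (ha : 0 < a) (hb : 0 < b) (hα : 0 < α) (hα1 : α ≤ 1) :
    ConvexOn ℝ (Set.Icc (0:ℝ) 1 ×ˢ Set.Icc (0:ℝ) 1)
      (fun p : ℝ × ℝ =>
        (1 - α * p.1) * Real.exp (-(a * p.1 + b * p.2)) + α * b * (p.1 ^ 2 + p.2 ^ 2)) := by
  refine ⟨(convex_Icc 0 1).prod (convex_Icc 0 1), ?_⟩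
  rintro x hx y hy s t hs ht hst
  rw [Set.mem_prod] at hx hy
  set d₁ : ℝ := y.1 - x.1 with hd₁
  set d₂ : ℝ := y.2 - x.2 with hd₂
  have hmem : ∀ r ∈ Icc (0:ℝ) 1, (x.1+d₁*r ∈ Icc (0:ℝ) 1 ∧ x.2+d₂*r ∈ Icc (0:ℝ) 1) := by
    intro r hr
    constructor
    · have := (convex_Icc (0:ℝ) 1) hx.1 hy.1 (by linarith [hr.2] : (0:ℝ) ≤ 1 - r) hr.1 (by ring)
      simpa [smul_eq_mul, hd₁] using (by rw [show x.1 + (y.1 - x.1)*r = (1-r)*x.1 + r*y.1 by ring]; exact this)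
    · have := (convex_Icc (0:ℝ) 1) hx.2 hy.2 (by linarith [hr.2] : (0:ℝ) ≤ 1 - r) hr.1 (by ring)
      simpa [smul_eq_mul, hd₂] using (by rw [show x.2 + (y.2 - x.2)*r = (1-r)*x.2 + r*y.2 by ring]; exact this)
  have hφ := line_convex a b α ha hb hα hα1 x.1 x.2 d₁ d₂ hmem
  have h01 : (0:ℝ) ∈ Icc (0:ℝ) 1 := by norm_num
  have h11 : (1:ℝ) ∈ Icc (0:ℝ) 1 := by norm_num
  have := hφ.2 h01 h11 hs ht hst
  simp only [smul_eq_mul, mul_zero, mul_one, zero_add] at this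
  have hs1 : s = 1 - t := by linarith
  calc (1 - α * (s • x + t • y).1) * Real.exp (-(a * (s • x + t • y).1 + b * (s • x + t • y).2)) +
        α * b * ((s • x + t • y).1 ^ 2 + (s • x + t • y).2 ^ 2)
      = (1 - α*(x.1+d₁*t)) * Real.exp (-(a*(x.1+d₁*t)+b*(x.2+d₂*t))) + α*b*((x.1+d₁*t)^2+(x.2+d₂*t)^2) := by
        have e1 : (s • x + t • y).1 = x.1 + d₁*t := by
          simp [Prod.fst_add, Prod.smul_fst, smul_eq_mul, hd₁, hs1]; ring
        have e2 : (s • x + t • y).2 = x.2 + d₂*t := by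
          simp [Prod.snd_add, Prod.smul_snd, smul_eq_mul, hd₂, hs1]; ring
        rw [e1, e2]
    _ ≤ s * ((1 - α*(x.1+0)) * Real.exp (-(a*(x.1+0)+b*(x.2+0))) + α*b*((x.1+0)^2+(x.2+0)^2))
        + t * ((1 - α*(x.1+d₁)) * Real.exp (-(a*(x.1+d₁)+b*(x.2+d₂))) + α*b*((x.1+d₁)^2+(x.2+d₂)^2)) := this
    _ = s * ((1 - α * x.1) * Real.exp (-(a * x.1 + b * x.2)) + α * b * (x.1 ^ 2 + x.2 ^ 2))
        + t * ((1 - α * y.1) * Real.exp (-(a * y.1 + b * y.2)) + α * b * (y.1 ^ 2 + y.2 ^ 2)) := by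
        have e1 : x.1 + 0 = x.1 := by ring
        have e2 : x.2 + 0 = x.2 := by ring
        have e3 : x.1 + d₁ = y.1 := by rw [hd₁]; ring
        have e4 : x.2 + d₂ = y.2 := by rw [hd₂]; ring
        rw [e1, e2, e3, e4]

/-- Proposition 1, second half: with `a = πα λ_UE R_UE² > 0`, `b = π λ_H R_H² > 0`
and `0 < α ≤ 1`, the function
`g(u,h) = (1 − α·u)·exp(−(a·u + b·h)) + α·b·(u² + h²)` is convex on `[0,1]²`,
and consequently `G(P) = Σ_i q_i · g(p_i^{UE}, p_i^{H})` is convex on `[0,1]^{2N}`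
for nonnegative weights `q_i`. -/
theorem G_convex (a b α : ℝ) (ha : 0 < a) (hb : 0 < b) (hα : 0 < α) (hα1 : α ≤ 1) :
    ConvexOn ℝ (Set.Icc (0:ℝ) 1 ×ˢ Set.Icc (0:ℝ) 1)
      (fun p : ℝ × ℝ =>
        (1 - α * p.1) * Real.exp (-(a * p.1 + b * p.2)) + α * b * (p.1 ^ 2 + p.2 ^ 2)) ∧
    ∀ (N : ℕ) (q : Fin N → ℝ), (∀ i, 0 ≤ q i) →
      ConvexOn ℝ {P : (Fin N → ℝ) × (Fin N → ℝ) |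
          ∀ i, P.1 i ∈ Set.Icc (0:ℝ) 1 ∧ P.2 i ∈ Set.Icc (0:ℝ) 1}
        (fun P => ∑ i, q i *
          ((1 - α * P.1 i) * Real.exp (-(a * P.1 i + b * P.2 i)) +
            α * b * ((P.1 i) ^ 2 + (P.2 i) ^ 2))) := by
  have hg := g_convexOn a b α ha hb hα hα1
  refine ⟨hg, ?_⟩
  intro N q hq
  set S : Set ((Fin N → ℝ) × (Fin N → ℝ)) :=
    {P | ∀ i, P.1 i ∈ Set.Icc (0:ℝ) 1 ∧ P.2 i ∈ Set.Icc (0:ℝ) 1} with hSdef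
  have hS : Convex ℝ S := by
    intro P hP Q hQ s t hs ht hst
    intro i
    constructor
    · have := (convex_Icc (0:ℝ) 1) (hP i).1 (hQ i).1 hs ht hst
      simpa [Prod.fst_add, Prod.smul_fst, smul_eq_mul] using this
    · have := (convex_Icc (0:ℝ) 1) (hP i).2 (hQ i).2 hs ht hst
      simpa [Prod.snd_add, Prod.smul_snd, smul_eq_mul] using this
  have hterm : ∀ i : Fin N, ConvexOn ℝ S (fun P : (Fin N → ℝ) × (Fin N → ℝ) =>
      (1 - α * P.1 i) * Real.exp (-(a * P.1 i + b * P.2 i)) + α * b * ((P.1 i) ^ 2 + (P.2 i) ^ 2)) := by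
    intro i
    refine ⟨hS, ?_⟩
    intro P hP Q hQ s t hs ht hst
    have hmemP : ((P.1 i, P.2 i) : ℝ × ℝ) ∈ Set.Icc (0:ℝ) 1 ×ˢ Set.Icc (0:ℝ) 1 :=
      Set.mem_prod.2 ⟨(hP i).1, (hP i).2⟩
    have hmemQ : ((Q.1 i, Q.2 i) : ℝ × ℝ) ∈ Set.Icc (0:ℝ) 1 ×ˢ Set.Icc (0:ℝ) 1 :=
      Set.mem_prod.2 ⟨(hQ i).1, (hQ i).2⟩
    have := hg.2 hmemP hmemQ hs ht hst
    simpa [Prod.fst_add, Prod.snd_add, Prod.smul_fst, Prod.smul_snd, Pi.add_apply, Pi.smul_apply,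
      smul_eq_mul] using this
  have hsum : ∀ s : Finset (Fin N), ConvexOn ℝ S (fun P => ∑ i ∈ s, q i *
      ((1 - α * P.1 i) * Real.exp (-(a * P.1 i + b * P.2 i)) +
        α * b * ((P.1 i) ^ 2 + (P.2 i) ^ 2))) := by
    intro s
    induction s using Finset.induction with
    | empty => simpa using convexOn_const (0:ℝ) hS
    | @insert j s hj ih =>
      have h1 : ConvexOn ℝ S (fun P : (Fin N → ℝ) × (Fin N → ℝ) => q j *
          ((1 - α * P.1 j) * Real.exp (-(a * P.1 j + b * P.2 j)) +
            α * b * ((P.1 j) ^ 2 + (P.2 j) ^ 2))) := by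
        simpa [smul_eq_mul] using (hterm j).smul (hq j)
      have := h1.add ih
      simp only [Finset.sum_insert hj]
      exact this
  exact hsum Finset.univ
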